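/- For every k > 0 with k_p = c_p k > 1 and every γ ∈ ℝ^d with |γ| ≤ k_p, the Fourier coefficient of the trace of the strength satisfies |(Tr σ)^(γ)| ≤ (2d c_p^{m−d−2}/|β_d|²) k^{m−d+3} M_EL(k) + 2d C₂ c_p^{−1} k^{−1}, where (Tr σ)^(γ) = ∫_{B₁} Tr σ(z) e^{−iγ·z} dz = Tr σ̂(γ). -/

import Mathlib

open MeasureTheory

noncomputable section

/-- `ℝ^d` with the Euclidean structure. -/
abbrev EdE (d : ℕ) := EuclideanSpace ℝ (Fin d)

/-- `|β_d|² = 1/(8π)` for `d = 2` and `1/(16π²)` otherwise (`d = 3`). -/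
def betaSq (d : ℕ) : ℝ := if d = 2 then 1 / (8 * Real.pi) else 1 / (16 * Real.pi ^ 2)

/-- Frobenius norm of a `d×d` complex matrix. -/
def frobCd {d : ℕ} (A : Matrix (Fin d) (Fin d) ℂ) : ℝ :=
  Real.sqrt (∑ i, ∑ j, ‖A i j‖ ^ 2)

/-- The rank-one complex matrix `x ŷᵀ`, i.e. `(x yᵀ)_{ij} = x_i y_j`. -/
def outerC {d : ℕ} (x y : EdE d) : Matrix (Fin d) (Fin d) ℂ :=
  Matrix.of fun i j => (x i : ℂ) * (y j : ℂ)

/-- Entrywise Fourier transform `σ̂(γ) = ∫_{ℝ^d} σ(z) e^{−iγ·z} dz` of the matrix-valued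
strength. -/
def matHatD {d : ℕ} (σ : EdE d → Matrix (Fin d) (Fin d) ℝ) (γ : EdE d) :
    Matrix (Fin d) (Fin d) ℂ :=
  Matrix.of fun i j => ∫ z, (σ z i j : ℂ) * Complex.exp (-Complex.I * ((inner ℝ γ z : ℝ) : ℂ))

/-- Entrywise integral `∫_{B₁} r(z,ξ) e^{−iγ·z} dz` of the residual. -/
def rIntD {d : ℕ} (r : EdE d → EdE d → Matrix (Fin d) (Fin d) ℂ) (ξ γ : EdE d) :
    Matrix (Fin d) (Fin d) ℂ :=
  Matrix.of fun i j =>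
    ∫ z in Metric.ball (0 : EdE d) 1,
      r z ξ i j * Complex.exp (-Complex.I * ((inner ℝ γ z : ℝ) : ℂ))

/-- Correlation of the compressional far-field patterns of the stochastic elastic wave
equation. -/
def Fp (d : ℕ) (m cp : ℝ) (σ : EdE d → Matrix (Fin d) (Fin d) ℝ)
    (r : EdE d → EdE d → Matrix (Fin d) (Fin d) ℂ) (k : ℝ) (x y : EdE d) : ℝ :=
  betaSq d * frobCd
    (((cp ^ ((d : ℝ) + 2 - m) * k ^ ((d : ℝ) - 3 - m) : ℝ) : ℂ) •
        (outerC x x * matHatD σ ((cp * k) • (x + y)) * outerC y y) +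
      ((cp ^ ((d : ℝ) + 2) * k ^ ((d : ℝ) - 3) : ℝ) : ℂ) •
        (outerC x x * rIntD r (-((cp * k) • y)) ((cp * k) • (x + y)) * outerC y y))

/-- Correlation of the shear far-field patterns of the stochastic elastic wave
equation. -/
def Fs (d : ℕ) (m cs : ℝ) (σ : EdE d → Matrix (Fin d) (Fin d) ℝ)
    (r : EdE d → EdE d → Matrix (Fin d) (Fin d) ℂ) (k : ℝ) (x y : EdE d) : ℝ :=
  betaSq d * frobCd
    (((cs ^ ((d : ℝ) + 2 - m) * k ^ ((d : ℝ) - 3 - m) : ℝ) : ℂ) •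
        ((1 - outerC x x) * matHatD σ ((cs * k) • (x + y)) * (1 - outerC y y)) +
      ((cs ^ ((d : ℝ) + 2) * k ^ ((d : ℝ) - 3) : ℝ) : ℂ) •
        ((1 - outerC x x) * rIntD r (-((cs * k) • y)) ((cs * k) • (x + y)) * (1 - outerC y y)))

/-- `M_EL(k) = max{ sup_{x̂,ŷ} F_p(x̂,ŷ,k), sup_{x̂,ŷ} F_s(x̂,ŷ,k) }`. -/
def MEL (d : ℕ) (m cp cs : ℝ) (σ : EdE d → Matrix (Fin d) (Fin d) ℝ)
    (r : EdE d → EdE d → Matrix (Fin d) (Fin d) ℂ) (k : ℝ) : ℝ :=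
  max (sSup {v : ℝ | ∃ x y : EdE d, ‖x‖ = 1 ∧ ‖y‖ = 1 ∧ v = Fp d m cp σ r k x y})
    (sSup {v : ℝ | ∃ x y : EdE d, ‖x‖ = 1 ∧ ‖y‖ = 1 ∧ v = Fs d m cs σ r k x y})

end

noncomputable section
namespace S10aux
variable {d : ℕ}

lemma outer_mul_mul (x y : EdE d) (A : Matrix (Fin d) (Fin d) ℂ) :
    outerC x x * A * outerC y y =
      Matrix.of fun a b => (x a : ℂ) * (∑ c, ∑ e, (x c:ℂ) * A c e * (y e:ℂ)) * (y b:ℂ) := by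
  ext a b
  simp only [Matrix.mul_apply, outerC, Matrix.of_apply, Finset.sum_mul, Finset.mul_sum]
  rw [Finset.sum_comm]
  apply Finset.sum_congr rfl; intro c _
  apply Finset.sum_congr rfl; intro e _
  ring

lemma frob_rank_one (x y : EdE d) (hx : ‖x‖ = 1) (hy : ‖y‖ = 1) (c : ℂ) :
    frobCd (Matrix.of fun a b => (x a : ℂ) * c * (y b : ℂ)) = ‖c‖ := by
  have hx2 : ∑ a, |x a| ^ 2 = 1 := by
    have := EuclideanSpace.norm_eq x
    rw [hx] at this
    have h2 : Real.sqrt (∑ a, ‖x a‖ ^ 2) = 1 := this.symm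
    simpa [Real.norm_eq_abs] using Real.sqrt_eq_one.mp h2
  have hy2 : ∑ a, |y a| ^ 2 = 1 := by
    have := EuclideanSpace.norm_eq y
    rw [hy] at this
    have h2 : Real.sqrt (∑ a, ‖y a‖ ^ 2) = 1 := this.symm
    simpa [Real.norm_eq_abs] using Real.sqrt_eq_one.mp h2
  have key : ∑ a, ∑ b, ‖((x a : ℂ) * c * (y b : ℂ))‖ ^ 2
      = (∑ a, |x a| ^ 2) * ‖c‖ ^ 2 * (∑ b, |y b| ^ 2) := by
    simp only [norm_mul, Complex.norm_real, Real.norm_eq_abs, mul_pow, Finset.sum_mul, Finset.mul_sum]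
    rw [Finset.sum_comm]
  rw [frobCd]
  simp only [Matrix.of_apply]
  rw [key, hx2, hy2]
  simpa using Real.sqrt_sq (norm_nonneg c)

lemma sum_single_collapse (i : Fin d) (A : Matrix (Fin d) (Fin d) ℂ) :
    ∑ c, ∑ e, ((EuclideanSpace.single i (1:ℝ)) c : ℂ) * A c e *
      (((-EuclideanSpace.single i (1:ℝ)) : EdE d) e : ℂ) = -(A i i) := by
  simp [EuclideanSpace.single_apply, apply_ite, Finset.sum_ite_eq, mul_comm]

lemma abs_exp_term (γ z : EdE d) :
    ‖(Complex.exp (-Complex.I * ((inner ℝ γ z : ℝ) : ℂ)))‖ = 1 := by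
  rw [Complex.norm_exp]; simp

lemma matHat_abs_le (σ : EdE d → Matrix (Fin d) (Fin d) ℝ) (γ : EdE d) (i j : Fin d) :
    ‖(matHatD σ γ i j)‖ ≤ ∫ z, |σ z i j| := by
  rw [matHatD, Matrix.of_apply]
  refine le_trans (norm_integral_le_integral_norm _) (le_of_eq ?_)
  congr 1; funext z
  rw [norm_mul, abs_exp_term]
  simp

lemma matHat_zero (σ : EdE d → Matrix (Fin d) (Fin d) ℝ) (i j : Fin d) :
    matHatD σ 0 i j = ((∫ z, σ z i j : ℝ) : ℂ) := by
  rw [matHatD, Matrix.of_apply]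
  have h : ∀ z : EdE d, (σ z i j : ℂ) * Complex.exp (-Complex.I * ((inner ℝ (0:EdE d) z : ℝ) : ℂ))
      = ((σ z i j : ℝ) : ℂ) := by intro z; simp
  rw [show (fun z => (σ z i j : ℂ) * Complex.exp (-Complex.I * ((inner ℝ (0:EdE d) z : ℝ) : ℂ)))
      = fun z => ((σ z i j : ℝ) : ℂ) from funext h]
  exact integral_ofReal

lemma abs_entry_le_frobCd (A : Matrix (Fin d) (Fin d) ℂ) (i j : Fin d) :
    ‖(A i j)‖ ≤ frobCd A := by
  rw [← Real.sqrt_sq (norm_nonneg (A i j))]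
  apply Real.sqrt_le_sqrt
  calc ‖(A i j)‖ ^ 2 ≤ ∑ b, ‖(A i b)‖ ^ 2 :=
        Finset.single_le_sum (f := fun b => ‖(A i b)‖ ^ 2)
          (fun b _ => sq_nonneg _) (Finset.mem_univ j)
    _ ≤ ∑ a, ∑ b, ‖(A a b)‖ ^ 2 :=
        Finset.single_le_sum (f := fun a => ∑ b, ‖(A a b)‖ ^ 2)
          (fun a _ => Finset.sum_nonneg fun b _ => sq_nonneg _) (Finset.mem_univ i)

lemma frobCd_le_sum (A : Matrix (Fin d) (Fin d) ℂ) :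
    frobCd A ≤ ∑ i, ∑ j, ‖(A i j)‖ := by
  have h : ∀ a : Fin d, ∑ j, ‖(A a j)‖ ^ 2 ≤ (∑ j, ‖(A a j)‖) ^ 2 :=
    fun a => Finset.sum_sq_le_sq_sum_of_nonneg fun j _ => norm_nonneg _
  rw [← Real.sqrt_sq (Finset.sum_nonneg fun i _ => Finset.sum_nonneg fun j _ => norm_nonneg (A i j))]
  apply Real.sqrt_le_sqrt
  calc ∑ i, ∑ j, ‖(A i j)‖ ^ 2 ≤ ∑ i, (∑ j, ‖(A i j)‖) ^ 2 :=
        Finset.sum_le_sum fun i _ => h i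
    _ ≤ (∑ i, ∑ j, ‖(A i j)‖) ^ 2 :=
        Finset.sum_sq_le_sq_sum_of_nonneg fun i _ =>
          Finset.sum_nonneg fun j _ => norm_nonneg _

lemma frob_integrableOn (r : EdE d → EdE d → Matrix (Fin d) (Fin d) ℂ)
    (hr_int : ∀ ξ i j, Integrable (fun z => r z ξ i j)) (ξ : EdE d) :
    IntegrableOn (fun z => frobCd (r z ξ)) (Metric.ball (0 : EdE d) 1) := by
  have hA : ∀ i j : Fin d, AEStronglyMeasurable (fun z => ‖(r z ξ i j)‖)
      (volume.restrict (Metric.ball (0 : EdE d) 1)) := fun i j => by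
    simpa using ((hr_int ξ i j).aestronglyMeasurable.norm.restrict)
  have hsum : AEStronglyMeasurable (fun z => ∑ i, ∑ j, ‖(r z ξ i j)‖ ^ 2)
      (volume.restrict (Metric.ball (0 : EdE d) 1)) := by
    apply Finset.aestronglyMeasurable_fun_sum
    intro i _
    apply Finset.aestronglyMeasurable_fun_sum
    intro j _
    exact (hA i j).mul (hA i j) |>.congr (Filter.EventuallyEq.of_eq (funext fun z => by simp [sq]))
  have hm : AEStronglyMeasurable (fun z => frobCd (r z ξ))
      (volume.restrict (Metric.ball (0 : EdE d) 1)) :=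
    Real.continuous_sqrt.comp_aestronglyMeasurable hsum
  refine Integrable.mono' (g := fun z => ∑ i, ∑ j, ‖(r z ξ i j)‖) ?_ hm ?_
  · apply integrable_finset_sum
    intro i _
    apply integrable_finset_sum
    intro j _
    simpa using ((hr_int ξ i j).norm.restrict (s := Metric.ball 0 1))
  · filter_upwards with z
    rw [Real.norm_eq_abs, abs_of_nonneg (show (0:ℝ) ≤ frobCd (r z ξ) from Real.sqrt_nonneg _)]
    exact frobCd_le_sum _

lemma rInt_abs_le (r : EdE d → EdE d → Matrix (Fin d) (Fin d) ℂ)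
    (hr_int : ∀ ξ i j, Integrable (fun z => r z ξ i j)) (ξ γ : EdE d) (i j : Fin d) :
    ‖(rIntD r ξ γ i j)‖ ≤ ∫ z in Metric.ball (0 : EdE d) 1, frobCd (r z ξ) := by
  rw [rIntD, Matrix.of_apply]
  refine le_trans (norm_integral_le_integral_norm _) ?_
  have heq : ∀ z : EdE d, ‖r z ξ i j * Complex.exp (-Complex.I * ((inner ℝ γ z : ℝ) : ℂ))‖
      = ‖(r z ξ i j)‖ := fun z => by
    rw [norm_mul, abs_exp_term]; ring
  rw [show (fun z => ‖r z ξ i j * Complex.exp (-Complex.I * ((inner ℝ γ z : ℝ) : ℂ))‖)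
      = fun z => ‖(r z ξ i j)‖ from funext heq]
  apply integral_mono_of_nonneg
  · filter_upwards with z; positivity
  · exact frob_integrableOn r hr_int ξ
  · filter_upwards with z; exact abs_entry_le_frobCd _ i j

lemma Fp_eq (m cp : ℝ) (σ : EdE d → Matrix (Fin d) (Fin d) ℝ)
    (r : EdE d → EdE d → Matrix (Fin d) (Fin d) ℂ) (k : ℝ) (x y : EdE d)
    (hx : ‖x‖ = 1) (hy : ‖y‖ = 1) :
    Fp d m cp σ r k x y = betaSq d * ‖(((cp ^ ((d : ℝ) + 2 - m) * k ^ ((d : ℝ) - 3 - m) : ℝ) : ℂ) *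
          (∑ c, ∑ e, (x c:ℂ) * matHatD σ ((cp * k) • (x + y)) c e * (y e:ℂ)) +
        ((cp ^ ((d : ℝ) + 2) * k ^ ((d : ℝ) - 3) : ℝ) : ℂ) *
          (∑ c, ∑ e, (x c:ℂ) * rIntD r (-((cp * k) • y)) ((cp * k) • (x + y)) c e * (y e:ℂ)))‖ := by
  rw [Fp, outer_mul_mul, outer_mul_mul]
  congr 1
  rw [show (((cp ^ ((d : ℝ) + 2 - m) * k ^ ((d : ℝ) - 3 - m) : ℝ) : ℂ) •
        (Matrix.of fun a b => (x a : ℂ) *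
          (∑ c, ∑ e, (x c:ℂ) * matHatD σ ((cp * k) • (x + y)) c e * (y e:ℂ)) * (y b:ℂ)) +
      ((cp ^ ((d : ℝ) + 2) * k ^ ((d : ℝ) - 3) : ℝ) : ℂ) •
        (Matrix.of fun a b => (x a : ℂ) *
          (∑ c, ∑ e, (x c:ℂ) * rIntD r (-((cp * k) • y)) ((cp * k) • (x + y)) c e * (y e:ℂ)) * (y b:ℂ)))
      = Matrix.of fun a b => (x a : ℂ) *
          (((cp ^ ((d : ℝ) + 2 - m) * k ^ ((d : ℝ) - 3 - m) : ℝ) : ℂ) *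
            (∑ c, ∑ e, (x c:ℂ) * matHatD σ ((cp * k) • (x + y)) c e * (y e:ℂ)) +
          ((cp ^ ((d : ℝ) + 2) * k ^ ((d : ℝ) - 3) : ℝ) : ℂ) *
            (∑ c, ∑ e, (x c:ℂ) * rIntD r (-((cp * k) • y)) ((cp * k) • (x + y)) c e * (y e:ℂ))) * (y b:ℂ)
      from by ext a b; simp [Matrix.smul_apply]; ring]
  exact frob_rank_one x y hx hy _

lemma coord_abs_le_norm (x : EdE d) (c : Fin d) : |x c| ≤ ‖x‖ := by
  rw [EuclideanSpace.norm_eq, ← Real.sqrt_sq (abs_nonneg (x c))]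
  apply Real.sqrt_le_sqrt
  calc |x c| ^ 2 = ‖x c‖ ^ 2 := by rw [Real.norm_eq_abs]
    _ ≤ ∑ i, ‖x i‖ ^ 2 := Finset.single_le_sum (f := fun i => ‖x i‖ ^ 2)
        (fun i _ => sq_nonneg _) (Finset.mem_univ c)

end S10aux
end

/-- For every `k > 0` with `k_p = c_p k > 1` and every `γ ∈ ℝ^d` with
`|γ| ≤ k_p`, the Fourier coefficient of the trace of the strength satisfies
`|(Tr σ)^(γ)| ≤ (2d c_p^{m−d−2}/|β_d|²) k^{m−d+3} M_EL(k) + 2d C₂ c_p⁻¹ k⁻¹`, where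
`(Tr σ)^(γ) = Tr σ̂(γ)`. -/
theorem statement10 (d : ℕ) (hd : d = 2 ∨ d = 3) (m C₂ μ lam : ℝ)
    (hm : (d : ℝ) - 2 < m ∧ m ≤ (d : ℝ)) (hC₂ : 0 < C₂) (hμ : 0 < μ) (hlam : 0 < lam + μ)
    (cp cs : ℝ) (hcp : cp = (lam + 2 * μ) ^ (-(1 / 2 : ℝ))) (hcs : cs = μ ^ (-(1 / 2 : ℝ)))
    (σ : EdE d → Matrix (Fin d) (Fin d) ℝ)
    (hσ_int : ∀ i j, Integrable (fun z => σ z i j))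
    (hσ_supp : ∀ z ∉ Metric.ball (0 : EdE d) 1, σ z = 0)
    (hσ_psd : ∀ z, (σ z).IsSymm ∧ (σ z).PosSemidef)
    (r : EdE d → EdE d → Matrix (Fin d) (Fin d) ℂ)
    (hr_int : ∀ ξ i j, Integrable (fun z => r z ξ i j))
    (hr_supp : ∀ ξ : EdE d, ∀ z ∉ Metric.ball (0 : EdE d) 1, r z ξ = 0)
    (hr_bd : ∀ ξ : EdE d, 1 < ‖ξ‖ →
      (∫ z in Metric.ball (0 : EdE d) 1, frobCd (r z ξ)) ≤ C₂ * ‖ξ‖ ^ (-(m + 1)))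
    (k : ℝ) (hk : 0 < k) (hkp : 1 < cp * k) (γ : EdE d) (hγ : ‖γ‖ ≤ cp * k) :
    ‖(matHatD σ γ).trace‖ ≤
      2 * (d : ℝ) * cp ^ (m - (d : ℝ) - 2) / betaSq d * k ^ (m - (d : ℝ) + 3) *
        MEL d m cp cs σ r k + 2 * (d : ℝ) * C₂ * cp⁻¹ * k⁻¹ := by
  classical
  have hd0 : 0 < d := by rcases hd with h | h <;> omega
  have hcp0 : 0 < cp := by
    rw [hcp]; exact Real.rpow_pos_of_pos (by linarith) _
  have hbeta : 0 < betaSq d := by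
    unfold betaSq; split <;> positivity
  have hkp0 : 0 < cp * k := lt_trans one_pos hkp
  have hdiag : ∀ (z : EdE d) (i : Fin d), 0 ≤ σ z i i := by
    intro z i
    have := (hσ_psd z).2.2 (Finsupp.single i 1)
    simpa using this
  have hSnn : ∀ i : Fin d, 0 ≤ ∫ z, σ z i i :=
    fun i => integral_nonneg fun z => hdiag z i
  have hs1 : 0 < cp ^ ((d : ℝ) + 2 - m) * k ^ ((d : ℝ) - 3 - m) :=
    mul_pos (Real.rpow_pos_of_pos hcp0 _) (Real.rpow_pos_of_pos hk _)
  have hs2 : 0 < cp ^ ((d : ℝ) + 2) * k ^ ((d : ℝ) - 3) :=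
    mul_pos (Real.rpow_pos_of_pos hcp0 _) (Real.rpow_pos_of_pos hk _)
  have ht0 : 0 < cp ^ (m - (d:ℝ) - 2) * k ^ (m - (d:ℝ) + 3) :=
    mul_pos (Real.rpow_pos_of_pos hcp0 _) (Real.rpow_pos_of_pos hk _)
  have key1 : (cp ^ ((d : ℝ) + 2 - m) * k ^ ((d : ℝ) - 3 - m)) *
      (cp ^ (m - (d:ℝ) - 2) * k ^ (m - (d:ℝ) + 3)) = 1 := by
    rw [mul_mul_mul_comm, ← Real.rpow_add hcp0, ← Real.rpow_add hk,
      show ((d:ℝ) + 2 - m) + (m - (d:ℝ) - 2) = 0 by ring,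
      show ((d:ℝ) - 3 - m) + (m - (d:ℝ) + 3) = 0 by ring]
    simp
  have key2 : (cp ^ ((d : ℝ) + 2) * k ^ ((d : ℝ) - 3)) * ((cp * k) ^ (-(m+1))) =
      (cp ^ ((d : ℝ) + 2 - m) * k ^ ((d : ℝ) - 3 - m)) * (cp⁻¹ * k⁻¹) := by
    rw [Real.mul_rpow hcp0.le hk.le,
      show cp ^ ((d:ℝ)+2) * k ^ ((d:ℝ)-3) * (cp ^ (-(m+1)) * k ^ (-(m+1)))
        = (cp ^ ((d:ℝ)+2) * cp ^ (-(m+1))) * (k ^ ((d:ℝ)-3) * k ^ (-(m+1))) by ring,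
      ← Real.rpow_add hcp0, ← Real.rpow_add hk,
      show cp ^ ((d:ℝ)+2-m) * k ^ ((d:ℝ)-3-m) * (cp⁻¹ * k⁻¹)
        = (cp ^ ((d:ℝ)+2-m) * cp⁻¹) * (k ^ ((d:ℝ)-3-m) * k⁻¹) by ring,
      ← Real.rpow_neg_one cp, ← Real.rpow_neg_one k,
      ← Real.rpow_add hcp0, ← Real.rpow_add hk,
      show ((d:ℝ)+2) + -(m+1) = ((d:ℝ)+2-m) + (-1) by ring,
      show ((d:ℝ)-3) + -(m+1) = ((d:ℝ)-3-m) + (-1) by ring]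
  -- uniform bound on the r-integral for |ξ| = cp k
  have hrb : ∀ ξ : EdE d, ‖ξ‖ = cp * k →
      (∫ z in Metric.ball (0:EdE d) 1, frobCd (r z ξ)) ≤ C₂ * (cp * k) ^ (-(m+1)) := by
    intro ξ hξ
    have h1 : 1 < ‖ξ‖ := by rw [hξ]; exact hkp
    have := hr_bd ξ h1
    rwa [hξ] at this
  -- bound on entries of matHatD
  have hK1 : ∀ (γ' : EdE d) (c e : Fin d),
      ‖(matHatD σ γ' c e)‖ ≤ ∫ z, |σ z c e| :=
    fun γ' c e => S10aux.matHat_abs_le σ γ' c e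
  -- Fp ≤ MEL for unit vectors
  have hFpleB : ∀ x y : EdE d, ‖x‖ = 1 → ‖y‖ = 1 →
      Fp d m cp σ r k x y ≤ MEL d m cp cs σ r k := by
    have hCb : ∀ x y : EdE d, ‖x‖ = 1 → ‖y‖ = 1 → Fp d m cp σ r k x y ≤
        betaSq d * ((cp ^ ((d : ℝ) + 2 - m) * k ^ ((d : ℝ) - 3 - m)) *
            (∑ c, ∑ e, ∫ z, |σ z c e|) +
          (cp ^ ((d : ℝ) + 2) * k ^ ((d : ℝ) - 3)) *
            ((d:ℝ)^2 * (C₂ * (cp * k) ^ (-(m+1))))) := by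
      intro x y hx hy
      rw [S10aux.Fp_eq m cp σ r k x y hx hy]
      have hxc : ∀ c, |x c| ≤ 1 := fun c => hx ▸ S10aux.coord_abs_le_norm x c
      have hyc : ∀ c, |y c| ≤ 1 := fun c => hy ▸ S10aux.coord_abs_le_norm y c
      apply mul_le_mul_of_nonneg_left _ hbeta.le
      refine le_trans (norm_add_le _ _) ?_
      rw [norm_mul, norm_mul, Complex.norm_real, Complex.norm_real, Real.norm_eq_abs, Real.norm_eq_abs,
        abs_of_pos hs1, abs_of_pos hs2]
      have hB1 : ‖(∑ c, ∑ e,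
          (x c:ℂ) * matHatD σ ((cp * k) • (x + y)) c e * (y e:ℂ))‖ ≤
          ∑ c, ∑ e, ∫ z, |σ z c e| := by
        refine le_trans (norm_sum_le _ _) (Finset.sum_le_sum fun c _ => ?_)
        refine le_trans (norm_sum_le _ _) (Finset.sum_le_sum fun e _ => ?_)
        rw [norm_mul, norm_mul, Complex.norm_real, Complex.norm_real, Real.norm_eq_abs, Real.norm_eq_abs]
        calc |x c| * ‖(matHatD σ ((cp * k) • (x + y)) c e)‖ * |y e|
            ≤ 1 * ‖(matHatD σ ((cp * k) • (x + y)) c e)‖ * 1 := by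
              have := norm_nonneg (matHatD σ ((cp * k) • (x + y)) c e)
              apply mul_le_mul (mul_le_mul (hxc c) le_rfl this (by norm_num)) (hyc e)
                (abs_nonneg _) (by positivity)
          _ = ‖(matHatD σ ((cp * k) • (x + y)) c e)‖ := by ring
          _ ≤ ∫ z, |σ z c e| := hK1 _ c e
      have hnξ : ‖(-((cp * k) • y) : EdE d)‖ = cp * k := by
        rw [norm_neg, norm_smul, hy, mul_one, Real.norm_eq_abs, abs_of_pos hkp0]
      have hB2 : ‖(∑ c, ∑ e,
          (x c:ℂ) * rIntD r (-((cp * k) • y)) ((cp * k) • (x + y)) c e * (y e:ℂ))‖ ≤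
          (d:ℝ)^2 * (C₂ * (cp * k) ^ (-(m+1))) := by
        refine le_trans (norm_sum_le _ _) ?_
        have step : ∀ c : Fin d, ‖(∑ e,
            (x c:ℂ) * rIntD r (-((cp * k) • y)) ((cp * k) • (x + y)) c e * (y e:ℂ))‖ ≤
            (d:ℝ) * (C₂ * (cp * k) ^ (-(m+1))) := by
          intro c
          refine le_trans (norm_sum_le _ _) ?_
          have step2 : ∀ e : Fin d, ‖((x c:ℂ) * rIntD r (-((cp * k) • y)) ((cp * k) • (x + y)) c e * (y e:ℂ))‖ ≤
              C₂ * (cp * k) ^ (-(m+1)) := by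
            intro e
            rw [norm_mul, norm_mul, Complex.norm_real, Complex.norm_real, Real.norm_eq_abs, Real.norm_eq_abs]
            have hR : ‖(rIntD r (-((cp * k) • y)) ((cp * k) • (x + y)) c e)‖ ≤
                C₂ * (cp * k) ^ (-(m+1)) :=
              le_trans (S10aux.rInt_abs_le r hr_int _ _ c e) (hrb _ hnξ)
            calc |x c| * ‖(rIntD r (-((cp * k) • y)) ((cp * k) • (x + y)) c e)‖ * |y e|
                ≤ 1 * ‖(rIntD r (-((cp * k) • y)) ((cp * k) • (x + y)) c e)‖ * 1 := by
                  apply mul_le_mul (mul_le_mul (hxc c) le_rfl (norm_nonneg _)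
                    (by norm_num)) (hyc e) (abs_nonneg _) (by positivity)
              _ = ‖(rIntD r (-((cp * k) • y)) ((cp * k) • (x + y)) c e)‖ := by ring
              _ ≤ C₂ * (cp * k) ^ (-(m+1)) := hR
          calc (∑ e, ‖((x c:ℂ) * rIntD r (-((cp * k) • y)) ((cp * k) • (x + y)) c e * (y e:ℂ))‖)
              ≤ ∑ _e : Fin d, C₂ * (cp * k) ^ (-(m+1)) :=
                Finset.sum_le_sum fun e _ => step2 e
            _ = (d:ℝ) * (C₂ * (cp * k) ^ (-(m+1))) := by
                simp [Finset.sum_const, Finset.card_univ]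
        calc (∑ c, ‖(∑ e,
            (x c:ℂ) * rIntD r (-((cp * k) • y)) ((cp * k) • (x + y)) c e * (y e:ℂ))‖)
            ≤ ∑ _c : Fin d, (d:ℝ) * (C₂ * (cp * k) ^ (-(m+1))) :=
              Finset.sum_le_sum fun c _ => step c
          _ = (d:ℝ) * ((d:ℝ) * (C₂ * (cp * k) ^ (-(m+1)))) := by
              simp [Finset.sum_const, Finset.card_univ]
          _ = (d:ℝ)^2 * (C₂ * (cp * k) ^ (-(m+1))) := by ring
      have h1 := mul_le_mul_of_nonneg_left hB1 hs1.le
      have h2 := mul_le_mul_of_nonneg_left hB2 hs2.le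
      linarith
    obtain ⟨Cb, hCb'⟩ : ∃ Cb : ℝ, ∀ x y : EdE d, ‖x‖ = 1 → ‖y‖ = 1 →
        Fp d m cp σ r k x y ≤ Cb := ⟨_, hCb⟩
    have hbdd : BddAbove {v : ℝ | ∃ x y : EdE d, ‖x‖ = 1 ∧ ‖y‖ = 1 ∧
        v = Fp d m cp σ r k x y} := by
      refine ⟨Cb, ?_⟩
      rintro v ⟨x', y', hx', hy', rfl⟩
      exact hCb' x' y' hx' hy'
    intro x y hx hy
    exact le_trans (le_csSup hbdd ⟨x, y, hx, hy, rfl⟩) (le_max_left _ _)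
  -- per-index estimate
  have hper : ∀ i : Fin d, (∫ z, σ z i i) ≤
      (cp ^ (m - (d:ℝ) - 2) * k ^ (m - (d:ℝ) + 3)) * MEL d m cp cs σ r k / betaSq d +
        C₂ * cp⁻¹ * k⁻¹ := by
    intro i
    have hx : ‖(EuclideanSpace.single i (1:ℝ) : EdE d)‖ = 1 := by simp
    have hy : ‖(-(EuclideanSpace.single i (1:ℝ)) : EdE d)‖ = 1 := by rw [norm_neg]; exact hx
    have hFeq := S10aux.Fp_eq (d := d) m cp σ r k
      (EuclideanSpace.single i (1:ℝ)) (-(EuclideanSpace.single i (1:ℝ))) hx hy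
    rw [show ((cp * k) • ((EuclideanSpace.single i (1:ℝ) : EdE d) +
          -(EuclideanSpace.single i (1:ℝ)))) = (0 : EdE d) by simp,
      show (-((cp * k) • (-(EuclideanSpace.single i (1:ℝ)))) : EdE d)
          = (cp * k) • EuclideanSpace.single i (1:ℝ) by simp,
      S10aux.sum_single_collapse, S10aux.sum_single_collapse] at hFeq
    set Mii : ℂ := matHatD σ 0 i i with hMii
    set Rii : ℂ := rIntD r ((cp * k) • EuclideanSpace.single i (1:ℝ)) 0 i i with hRii
    have habs : Fp d m cp σ r k (EuclideanSpace.single i (1:ℝ))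
        (-(EuclideanSpace.single i (1:ℝ))) =
        betaSq d * ‖(((cp ^ ((d : ℝ) + 2 - m) * k ^ ((d : ℝ) - 3 - m) : ℝ) : ℂ) * Mii +
            ((cp ^ ((d : ℝ) + 2) * k ^ ((d : ℝ) - 3) : ℝ) : ℂ) * Rii)‖ := by
      rw [hFeq]
      congr 1
      rw [show ((cp ^ ((d : ℝ) + 2 - m) * k ^ ((d : ℝ) - 3 - m) : ℝ) : ℂ) * (-Mii) +
          ((cp ^ ((d : ℝ) + 2) * k ^ ((d : ℝ) - 3) : ℝ) : ℂ) * (-Rii)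
          = -((((cp ^ ((d : ℝ) + 2 - m) * k ^ ((d : ℝ) - 3 - m) : ℝ) : ℂ)) * Mii +
            (((cp ^ ((d : ℝ) + 2) * k ^ ((d : ℝ) - 3) : ℝ) : ℂ)) * Rii) by ring]
      exact norm_neg _
    have hMval : Mii = ((∫ z, σ z i i : ℝ) : ℂ) := S10aux.matHat_zero σ i i
    have hRbd : ‖Rii‖ ≤ C₂ * (cp * k) ^ (-(m+1)) := by
      refine le_trans (S10aux.rInt_abs_le r hr_int _ _ i i) (hrb _ ?_)
      rw [norm_smul, Real.norm_eq_abs, abs_of_pos hkp0]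
      simp
    -- triangle inequality step
    have htri : (cp ^ ((d : ℝ) + 2 - m) * k ^ ((d : ℝ) - 3 - m)) * (∫ z, σ z i i) ≤
        ‖(((cp ^ ((d : ℝ) + 2 - m) * k ^ ((d : ℝ) - 3 - m) : ℝ) : ℂ) * Mii +
          ((cp ^ ((d : ℝ) + 2) * k ^ ((d : ℝ) - 3) : ℝ) : ℂ) * Rii)‖ +
          (cp ^ ((d : ℝ) + 2) * k ^ ((d : ℝ) - 3)) * (C₂ * (cp * k) ^ (-(m+1))) := by
      have e1 : ‖(((cp ^ ((d : ℝ) + 2 - m) * k ^ ((d : ℝ) - 3 - m) : ℝ) : ℂ) * Mii)‖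
          = (cp ^ ((d : ℝ) + 2 - m) * k ^ ((d : ℝ) - 3 - m)) * (∫ z, σ z i i) := by
        rw [hMval, ← Complex.ofReal_mul, Complex.norm_real, Real.norm_eq_abs,
          abs_of_nonneg (mul_nonneg hs1.le (hSnn i))]
      have e2 : ‖(((cp ^ ((d : ℝ) + 2) * k ^ ((d : ℝ) - 3) : ℝ) : ℂ) * Rii)‖
          ≤ (cp ^ ((d : ℝ) + 2) * k ^ ((d : ℝ) - 3)) * (C₂ * (cp * k) ^ (-(m+1))) := by
        rw [norm_mul, Complex.norm_real, Real.norm_eq_abs, abs_of_pos hs2]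
        exact mul_le_mul_of_nonneg_left hRbd hs2.le
      have e3 : ‖(((cp ^ ((d : ℝ) + 2 - m) * k ^ ((d : ℝ) - 3 - m) : ℝ) : ℂ) * Mii)‖
          ≤ ‖(((cp ^ ((d : ℝ) + 2 - m) * k ^ ((d : ℝ) - 3 - m) : ℝ) : ℂ) * Mii +
              ((cp ^ ((d : ℝ) + 2) * k ^ ((d : ℝ) - 3) : ℝ) : ℂ) * Rii)‖ +
            ‖(((cp ^ ((d : ℝ) + 2) * k ^ ((d : ℝ) - 3) : ℝ) : ℂ) * Rii)‖ := by
        have := norm_add_le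
          ((((cp ^ ((d : ℝ) + 2 - m) * k ^ ((d : ℝ) - 3 - m) : ℝ) : ℂ)) * Mii +
            (((cp ^ ((d : ℝ) + 2) * k ^ ((d : ℝ) - 3) : ℝ) : ℂ)) * Rii)
          (-((((cp ^ ((d : ℝ) + 2) * k ^ ((d : ℝ) - 3) : ℝ) : ℂ)) * Rii))
        simpa using this
      linarith
    -- Fp value ≤ MEL
    have hFle : betaSq d * ‖(((cp ^ ((d : ℝ) + 2 - m) * k ^ ((d : ℝ) - 3 - m) : ℝ) : ℂ) * Mii +
          ((cp ^ ((d : ℝ) + 2) * k ^ ((d : ℝ) - 3) : ℝ) : ℂ) * Rii)‖ ≤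
        MEL d m cp cs σ r k := by
      rw [← habs]
      exact hFpleB _ _ hx hy
    have habsle : ‖(((cp ^ ((d : ℝ) + 2 - m) * k ^ ((d : ℝ) - 3 - m) : ℝ) : ℂ) * Mii +
          ((cp ^ ((d : ℝ) + 2) * k ^ ((d : ℝ) - 3) : ℝ) : ℂ) * Rii)‖ ≤
        MEL d m cp cs σ r k / betaSq d := by
      rw [le_div_iff₀ hbeta]
      linarith
    have hmain : (cp ^ ((d : ℝ) + 2 - m) * k ^ ((d : ℝ) - 3 - m)) * (∫ z, σ z i i) ≤
        MEL d m cp cs σ r k / betaSq d +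
          (cp ^ ((d : ℝ) + 2 - m) * k ^ ((d : ℝ) - 3 - m)) * (C₂ * (cp⁻¹ * k⁻¹)) := by
      have hk2 : (cp ^ ((d : ℝ) + 2) * k ^ ((d : ℝ) - 3)) * (C₂ * (cp * k) ^ (-(m+1)))
          = (cp ^ ((d : ℝ) + 2 - m) * k ^ ((d : ℝ) - 3 - m)) * (C₂ * (cp⁻¹ * k⁻¹)) := by
        have := key2
        calc (cp ^ ((d : ℝ) + 2) * k ^ ((d : ℝ) - 3)) * (C₂ * (cp * k) ^ (-(m+1)))
            = C₂ * ((cp ^ ((d : ℝ) + 2) * k ^ ((d : ℝ) - 3)) * ((cp * k) ^ (-(m+1)))) := by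
              ring
          _ = C₂ * ((cp ^ ((d : ℝ) + 2 - m) * k ^ ((d : ℝ) - 3 - m)) * (cp⁻¹ * k⁻¹)) := by
              rw [key2]
          _ = (cp ^ ((d : ℝ) + 2 - m) * k ^ ((d : ℝ) - 3 - m)) * (C₂ * (cp⁻¹ * k⁻¹)) := by
              ring
      rw [hk2] at htri
      linarith
    -- multiply by t
    calc (∫ z, σ z i i)
        = (cp ^ (m - (d:ℝ) - 2) * k ^ (m - (d:ℝ) + 3)) *
            ((cp ^ ((d : ℝ) + 2 - m) * k ^ ((d : ℝ) - 3 - m)) * (∫ z, σ z i i)) := by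
          rw [← mul_assoc, mul_comm (cp ^ (m - (d:ℝ) - 2) * k ^ (m - (d:ℝ) + 3)), key1, one_mul]
      _ ≤ (cp ^ (m - (d:ℝ) - 2) * k ^ (m - (d:ℝ) + 3)) *
            (MEL d m cp cs σ r k / betaSq d +
              (cp ^ ((d : ℝ) + 2 - m) * k ^ ((d : ℝ) - 3 - m)) * (C₂ * (cp⁻¹ * k⁻¹))) :=
          mul_le_mul_of_nonneg_left hmain ht0.le
      _ = (cp ^ (m - (d:ℝ) - 2) * k ^ (m - (d:ℝ) + 3)) * MEL d m cp cs σ r k / betaSq d +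
            ((cp ^ ((d : ℝ) + 2 - m) * k ^ ((d : ℝ) - 3 - m)) *
              (cp ^ (m - (d:ℝ) - 2) * k ^ (m - (d:ℝ) + 3))) * (C₂ * (cp⁻¹ * k⁻¹)) := by
          ring
      _ = (cp ^ (m - (d:ℝ) - 2) * k ^ (m - (d:ℝ) + 3)) * MEL d m cp cs σ r k / betaSq d +
            C₂ * cp⁻¹ * k⁻¹ := by
          rw [key1]; ring
  -- trace bound
  have htr : ‖(matHatD σ γ).trace‖ ≤ ∑ i, ∫ z, σ z i i := by
    rw [show (matHatD σ γ).trace = ∑ i, matHatD σ γ i i by simp [Matrix.trace, Matrix.diag]]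
    refine le_trans (norm_sum_le _ _) (Finset.sum_le_sum fun i _ => ?_)
    refine le_trans (S10aux.matHat_abs_le σ γ i i) (le_of_eq ?_)
    congr 1
    funext z
    exact abs_of_nonneg (hdiag z i)
  -- MEL nonneg
  have hBnn : 0 ≤ MEL d m cp cs σ r k := by
    have i0 : Fin d := ⟨0, hd0⟩
    have hx : ‖(EuclideanSpace.single i0 (1:ℝ) : EdE d)‖ = 1 := by simp
    have hy : ‖(-(EuclideanSpace.single i0 (1:ℝ)) : EdE d)‖ = 1 := by rw [norm_neg]; exact hx
    refine le_trans ?_ (hFpleB _ _ hx hy)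
    exact mul_nonneg hbeta.le (Real.sqrt_nonneg _)
  -- final assembly
  have hsum : ∑ i : Fin d, (∫ z, σ z i i) ≤
      (d:ℝ) * ((cp ^ (m - (d:ℝ) - 2) * k ^ (m - (d:ℝ) + 3)) * MEL d m cp cs σ r k / betaSq d +
        C₂ * cp⁻¹ * k⁻¹) := by
    calc (∑ i : Fin d, (∫ z, σ z i i))
        ≤ ∑ _i : Fin d, ((cp ^ (m - (d:ℝ) - 2) * k ^ (m - (d:ℝ) + 3)) *
            MEL d m cp cs σ r k / betaSq d + C₂ * cp⁻¹ * k⁻¹) :=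
          Finset.sum_le_sum fun i _ => hper i
      _ = (d:ℝ) * ((cp ^ (m - (d:ℝ) - 2) * k ^ (m - (d:ℝ) + 3)) *
            MEL d m cp cs σ r k / betaSq d + C₂ * cp⁻¹ * k⁻¹) := by
          simp [Finset.sum_const, Finset.card_univ]
          ring
  have hX : 0 ≤ (cp ^ (m - (d:ℝ) - 2) * k ^ (m - (d:ℝ) + 3)) *
      MEL d m cp cs σ r k / betaSq d :=
    div_nonneg (mul_nonneg ht0.le hBnn) hbeta.le
  have hY : 0 ≤ C₂ * cp⁻¹ * k⁻¹ := by positivity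
  have hfin : 2 * (d : ℝ) * cp ^ (m - (d : ℝ) - 2) / betaSq d * k ^ (m - (d : ℝ) + 3) *
      MEL d m cp cs σ r k + 2 * (d : ℝ) * C₂ * cp⁻¹ * k⁻¹ =
      2 * (d:ℝ) * ((cp ^ (m - (d:ℝ) - 2) * k ^ (m - (d:ℝ) + 3)) *
        MEL d m cp cs σ r k / betaSq d) + 2 * (d:ℝ) * (C₂ * cp⁻¹ * k⁻¹) := by
    ring
  rw [hfin]
  have hdnn : (0:ℝ) ≤ (d:ℝ) := Nat.cast_nonneg d
  have h1 : 0 ≤ (d:ℝ) * ((cp ^ (m - (d:ℝ) - 2) * k ^ (m - (d:ℝ) + 3)) *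
      MEL d m cp cs σ r k / betaSq d) := mul_nonneg hdnn hX
  have h2 : 0 ≤ (d:ℝ) * (C₂ * cp⁻¹ * k⁻¹) := mul_nonneg hdnn hY
  calc ‖(matHatD σ γ).trace‖ ≤ ∑ i, ∫ z, σ z i i := htr
    _ ≤ (d:ℝ) * ((cp ^ (m - (d:ℝ) - 2) * k ^ (m - (d:ℝ) + 3)) *
          MEL d m cp cs σ r k / betaSq d + C₂ * cp⁻¹ * k⁻¹) := hsum
    _ ≤ 2 * (d:ℝ) * ((cp ^ (m - (d:ℝ) - 2) * k ^ (m - (d:ℝ) + 3)) *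
          MEL d m cp cs σ r k / betaSq d) + 2 * (d:ℝ) * (C₂ * cp⁻¹ * k⁻¹) := by
        nlinarith [h1, h2]
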